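/- Let n be a natural number, w : Fin n → ℕ a weight function, d a natural number, and P a multivariate polynomial over ℂ in variables indexed by Fin n that is weighted homogeneous of degree d with respect to w. Then there exist multivariate polynomials Q and R over ℝ in variables indexed by Fin n ⊕ Fin n, each weighted homogeneous of degree d with respect to the weight function assigning weight w(i) to both copies of the i-th variable, such that for all x, y : Fin n → ℝ one has P evaluated at the point (x(0)+i·y(0), …, x(n−1)+i·y(n−1)) equals Q(x,y) + i·R(x,y), where i is the imaginary unit. -/

import Mathlib

open MvPolynomial Complex

lemma isWH_pow {σ : Type*} {w : σ → ℕ} {φ : MvPolynomial σ ℂ} {m : ℕ}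
    (h : φ.IsWeightedHomogeneous w m) (k : ℕ) :
    (φ ^ k).IsWeightedHomogeneous w (k * m) := by
  induction k with
  | zero => simpa using isWeightedHomogeneous_one _ _
  | succ k ih =>
    rw [pow_succ, add_mul, one_mul]
    exact ih.mul h

/-- If `P` is a weighted homogeneous complex polynomial of degree `d` (weights `w`),
then substituting `X i ↦ x i + I * y i` produces real and imaginary parts that are
weighted homogeneous real polynomials of the same degree `d` in the doubled set of
variables, each copy of the `i`-th variable carrying the weight `w i`. -/
theorem realImaginaryParts_isWeightedHomogeneous
    (n : ℕ) (w : Fin n → ℕ) (d : ℕ) (P : MvPolynomial (Fin n) ℂ)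
    (hP : P.IsWeightedHomogeneous w d) :
    ∃ Q R : MvPolynomial (Fin n ⊕ Fin n) ℝ,
      Q.IsWeightedHomogeneous (Sum.elim w w) d ∧
      R.IsWeightedHomogeneous (Sum.elim w w) d ∧
      ∀ x y : Fin n → ℝ,
        MvPolynomial.eval (fun i => (x i : ℂ) + Complex.I * (y i : ℂ)) P =
          ((MvPolynomial.eval (Sum.elim x y) Q : ℝ) : ℂ) +
            Complex.I * ((MvPolynomial.eval (Sum.elim x y) R : ℝ) : ℂ) := by
  classical
  set f : Fin n → MvPolynomial (Fin n ⊕ Fin n) ℂ :=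
    fun i => X (Sum.inl i) + C Complex.I * X (Sum.inr i) with hf
  set S : MvPolynomial (Fin n ⊕ Fin n) ℂ := bind₁ f P with hSdef
  have hfWH : ∀ i, (f i).IsWeightedHomogeneous (Sum.elim w w) (w i) := by
    intro i
    apply IsWeightedHomogeneous.add
    · simpa using isWeightedHomogeneous_X ℂ (Sum.elim w w) (Sum.inl i)
    · have := (isWeightedHomogeneous_C (Sum.elim w w) (Complex.I)).mul
        (isWeightedHomogeneous_X ℂ (Sum.elim w w) (Sum.inr i))
      simpa using this
  have hS : S.IsWeightedHomogeneous (Sum.elim w w) d := by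
    rw [hSdef, bind₁, aeval_def, eval₂_eq]
    apply IsWeightedHomogeneous.sum
    intro m hm
    have h1 : (C (P.coeff m) * ∏ i ∈ m.support, (f i) ^ m i :
        MvPolynomial (Fin n ⊕ Fin n) ℂ).IsWeightedHomogeneous (Sum.elim w w)
        (0 + ∑ i ∈ m.support, m i * w i) := by
      apply (isWeightedHomogeneous_C _ _).mul
      apply IsWeightedHomogeneous.prod
      intro i _
      exact isWH_pow (hfWH i) (m i)
    have h2 : 0 + ∑ i ∈ m.support, m i * w i = d := by
      rw [zero_add, ← hP (mem_support_iff.mp hm), Finsupp.weight_apply, Finsupp.sum]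
      simp [smul_eq_mul]
    rwa [h2] at h1
  set Q : MvPolynomial (Fin n ⊕ Fin n) ℝ :=
    ∑ m ∈ S.support, monomial m ((S.coeff m).re) with hQdef
  set R : MvPolynomial (Fin n ⊕ Fin n) ℝ :=
    ∑ m ∈ S.support, monomial m ((S.coeff m).im) with hRdef
  have hQc : ∀ m, Q.coeff m = (S.coeff m).re := by
    intro m
    rw [hQdef, coeff_sum]
    by_cases hm : m ∈ S.support
    · rw [Finset.sum_eq_single m (fun b _ hb => by rw [coeff_monomial, if_neg hb])
        (fun h => absurd hm h), coeff_monomial, if_pos rfl]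
    · have : (S.coeff m) = 0 := of_not_not (mt mem_support_iff.mpr hm)
      rw [this]
      simp only [Complex.zero_re]
      apply Finset.sum_eq_zero
      intro b hb
      rw [coeff_monomial, if_neg]
      rintro rfl; exact hm hb
  have hRc : ∀ m, R.coeff m = (S.coeff m).im := by
    intro m
    rw [hRdef, coeff_sum]
    by_cases hm : m ∈ S.support
    · rw [Finset.sum_eq_single m (fun b _ hb => by rw [coeff_monomial, if_neg hb])
        (fun h => absurd hm h), coeff_monomial, if_pos rfl]
    · have : (S.coeff m) = 0 := of_not_not (mt mem_support_iff.mpr hm)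
      rw [this]
      simp only [Complex.zero_im]
      apply Finset.sum_eq_zero
      intro b hb
      rw [coeff_monomial, if_neg]
      rintro rfl; exact hm hb
  refine ⟨Q, R, ?_, ?_, ?_⟩
  · intro m hm
    exact hS (by rw [hQc] at hm; exact fun h => hm (by rw [h]; simp))
  · intro m hm
    exact hS (by rw [hRc] at hm; exact fun h => hm (by rw [h]; simp))
  · intro x y
    have hdecomp : S = map (algebraMap ℝ ℂ) Q + C Complex.I * map (algebraMap ℝ ℂ) R := by
      ext m
      rw [coeff_add, coeff_C_mul, coeff_map, coeff_map, hQc, hRc]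
      simp [Complex.ext_iff]
    have hL : MvPolynomial.eval (fun s => ((Sum.elim x y s : ℝ) : ℂ)) S =
        MvPolynomial.eval (fun i => (x i : ℂ) + Complex.I * (y i : ℂ)) P := by
      rw [hSdef]
      rw [← coe_aeval_eq_eval, ← coe_aeval_eq_eval]
      show (aeval fun s => ((Sum.elim x y s : ℝ) : ℂ)) (bind₁ f P)
          = (aeval fun i => (x i : ℂ) + Complex.I * (y i : ℂ)) P
      rw [aeval_bind₁]
      have hfun : (fun i => (aeval fun s => ((Sum.elim x y s : ℝ) : ℂ)) (f i))
          = fun i => (x i : ℂ) + Complex.I * (y i : ℂ) := by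
        funext i; simp [hf]
      rw [hfun]
    have hmapQ : MvPolynomial.eval (fun s => ((Sum.elim x y s : ℝ) : ℂ))
        (map (algebraMap ℝ ℂ) Q) = ((MvPolynomial.eval (Sum.elim x y) Q : ℝ) : ℂ) := by
      rw [eval_map]
      have h := (eval₂_comp_left (algebraMap ℝ ℂ) (RingHom.id ℝ) (Sum.elim x y) Q).symm
      simpa [Function.comp_def, eval₂_id] using h
    have hmapR : MvPolynomial.eval (fun s => ((Sum.elim x y s : ℝ) : ℂ))
        (map (algebraMap ℝ ℂ) R) = ((MvPolynomial.eval (Sum.elim x y) R : ℝ) : ℂ) := by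
      rw [eval_map]
      have h := (eval₂_comp_left (algebraMap ℝ ℂ) (RingHom.id ℝ) (Sum.elim x y) R).symm
      simpa [Function.comp_def, eval₂_id] using h
    rw [← hL, hdecomp]
    simp [hmapQ, hmapR]
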